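/- arXiv:0711.4231 — 3 statements merged into one kernel-verified Lean document; each statement's English description precedes it below -/
import Mathlib

section
/- Let V, V₀ and W be finite-dimensional complex vector spaces equipped with linear involutions J_V, J₀ and J_W, and suppose trace(J₀) = 0 (the superdimension of V₀ is zero). Let α : V₀ ⊗ W → V and β : V → V₀ ⊗ W be even linear maps, i.e. α ∘ (J₀ ⊗ J_W) = J_V ∘ α and β ∘ J_V = (J₀ ⊗ J_W) ∘ β, with α ∘ β = id_V. Let f : V → V be a linear map and suppose there exists c ∈ ℂ such that ptr(β ∘ f ∘ α) = c · id_{V₀}, where ptr denotes the partial supertrace over W. Then trace(J_V ∘ f) = 0, i.e. the supertrace of f vanishes. -/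
open LinearMap TensorProduct

/-- The partial supertrace over `W` of an endomorphism of `V₀ ⊗ W`:
`ptr f = (id ⊗ ev) ∘ (((id ⊗ J_W) ∘ f) ⊗ id_{W*}) ∘ (id ⊗ coev)`. -/
noncomputable def ptr {V₀ W : Type*} [AddCommGroup V₀] [Module ℂ V₀]
    [AddCommGroup W] [Module ℂ W] [FiniteDimensional ℂ W]
    (JW : W →ₗ[ℂ] W) (f : (V₀ ⊗[ℂ] W) →ₗ[ℂ] (V₀ ⊗[ℂ] W)) : V₀ →ₗ[ℂ] V₀ :=
  (TensorProduct.rid ℂ V₀).toLinearMap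
    ∘ₗ TensorProduct.map LinearMap.id (contractRight ℂ W)
    ∘ₗ (TensorProduct.assoc ℂ V₀ W (Module.Dual ℂ W)).toLinearMap
    ∘ₗ TensorProduct.map ((TensorProduct.map LinearMap.id JW) ∘ₗ f) LinearMap.id
    ∘ₗ (TensorProduct.assoc ℂ V₀ W (Module.Dual ℂ W)).symm.toLinearMap
    ∘ₗ TensorProduct.map LinearMap.id (coevaluation ℂ W)
    ∘ₗ (TensorProduct.rid ℂ V₀).symm.toLinearMap

lemma ptr_add {V₀ W : Type*} [AddCommGroup V₀] [Module ℂ V₀]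
    [AddCommGroup W] [Module ℂ W] [FiniteDimensional ℂ W]
    (JW : W →ₗ[ℂ] W) (f g : (V₀ ⊗[ℂ] W) →ₗ[ℂ] (V₀ ⊗[ℂ] W)) :
    ptr JW (f + g) = ptr JW f + ptr JW g := by
  simp only [ptr, comp_add, TensorProduct.map_add_left, add_comp]

lemma ptr_zero {V₀ W : Type*} [AddCommGroup V₀] [Module ℂ V₀]
    [AddCommGroup W] [Module ℂ W] [FiniteDimensional ℂ W]
    (JW : W →ₗ[ℂ] W) : ptr (V₀ := V₀) JW 0 = 0 := by
  simp only [ptr, comp_zero, TensorProduct.map_zero_left, zero_comp]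

lemma ptr_map {V₀ W : Type*} [AddCommGroup V₀] [Module ℂ V₀]
    [AddCommGroup W] [Module ℂ W] [FiniteDimensional ℂ W]
    (JW : W →ₗ[ℂ] W) (f₀ : V₀ →ₗ[ℂ] V₀) (f₁ : W →ₗ[ℂ] W) :
    ptr JW (TensorProduct.map f₀ f₁) = (trace ℂ W (JW ∘ₗ f₁)) • f₀ := by
  classical
  ext v
  have hco := coevaluation_apply_one ℂ W
  simp only at hco
  have htr : trace ℂ W (JW ∘ₗ f₁) =
      ∑ i, (Module.Basis.ofVectorSpace ℂ W).coord i (JW (f₁ (Module.Basis.ofVectorSpace ℂ W i))) := by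
    rw [trace_eq_matrix_trace ℂ (Module.Basis.ofVectorSpace ℂ W)]
    simp [Matrix.trace, Matrix.diag, LinearMap.toMatrix_apply, Module.Basis.coord]
  simp [ptr, hco, htr, TensorProduct.tmul_sum, Finset.sum_smul, map_sum]

lemma trace_ptr {V₀ W : Type*} [AddCommGroup V₀] [Module ℂ V₀] [FiniteDimensional ℂ V₀]
    [AddCommGroup W] [Module ℂ W] [FiniteDimensional ℂ W]
    (J₀ : V₀ →ₗ[ℂ] V₀) (JW : W →ₗ[ℂ] W) (h : (V₀ ⊗[ℂ] W) →ₗ[ℂ] (V₀ ⊗[ℂ] W)) :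
    trace ℂ V₀ (J₀ ∘ₗ ptr JW h) = trace ℂ (V₀ ⊗[ℂ] W) (TensorProduct.map J₀ JW ∘ₗ h) := by
  obtain ⟨x, rfl⟩ := (homTensorHomEquiv ℂ V₀ W V₀ W).surjective h
  induction x using TensorProduct.induction_on with
  | zero => simp [ptr_zero]
  | tmul f₀ f₁ =>
      rw [homTensorHomEquiv_apply, homTensorHomMap_apply, ptr_map,
        ← TensorProduct.map_comp, trace_tensorProduct']
      rw [LinearMap.comp_smul, map_smul]
      simp [mul_comm]
  | add x y hx hy =>
      rw [map_add, ptr_add, comp_add, comp_add, map_add, map_add, hx, hy]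

/-- If `V` is a retract (via even maps `α`, `β`) of `V₀ ⊗ W` with `sdim V₀ = 0`, and the
partial supertrace of `β ∘ f ∘ α` is a scalar multiple of the identity of `V₀`, then the
supertrace of `f` vanishes. -/
theorem supertrace_eq_zero_of_retract
    {V V₀ W : Type*} [AddCommGroup V] [Module ℂ V] [FiniteDimensional ℂ V]
    [AddCommGroup V₀] [Module ℂ V₀] [FiniteDimensional ℂ V₀]
    [AddCommGroup W] [Module ℂ W] [FiniteDimensional ℂ W]
    (JV : V →ₗ[ℂ] V) (J₀ : V₀ →ₗ[ℂ] V₀) (JW : W →ₗ[ℂ] W)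
    (hJV : JV ∘ₗ JV = LinearMap.id) (hJ₀ : J₀ ∘ₗ J₀ = LinearMap.id)
    (hJW : JW ∘ₗ JW = LinearMap.id)
    (hsdim : trace ℂ V₀ J₀ = 0)
    (α : (V₀ ⊗[ℂ] W) →ₗ[ℂ] V) (β : V →ₗ[ℂ] (V₀ ⊗[ℂ] W))
    (hα : α ∘ₗ TensorProduct.map J₀ JW = JV ∘ₗ α)
    (hβ : β ∘ₗ JV = TensorProduct.map J₀ JW ∘ₗ β)
    (hαβ : α ∘ₗ β = LinearMap.id)
    (f : V →ₗ[ℂ] V) (c : ℂ)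
    (hc : ptr JW (β ∘ₗ f ∘ₗ α) = c • LinearMap.id) :
    trace ℂ V (JV ∘ₗ f) = 0 := by
  have h1 : JV ∘ₗ f = (JV ∘ₗ f ∘ₗ α) ∘ₗ β := by
    rw [comp_assoc, comp_assoc, hαβ, comp_id]
  have h2 : β ∘ₗ (JV ∘ₗ f ∘ₗ α) = TensorProduct.map J₀ JW ∘ₗ (β ∘ₗ f ∘ₗ α) := by
    rw [← comp_assoc, ← comp_assoc, hβ, comp_assoc, comp_assoc]
  rw [h1, trace_comp_comm', h2, ← trace_ptr, hc]
  rw [LinearMap.comp_smul, map_smul]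
  simp [hsdim]
end

section
/- Let C be a ℂ-linear preadditive monoidal category with binary biproducts, in which composition and the tensor product of morphisms are ℂ-bilinear (C is monoidal preadditive and monoidal ℂ-linear), and which has right duals. Fix an object V₀ and an object T of C. Then the set IT(T) := { t ∈ Hom(𝟙, T) | there exist an object V with V ∈ I_{V₀} and a morphism f : V ⊗ Vᘁ ⟶ T such that t = η_V ≫ f } is a ℂ-submodule of the hom-module Hom(𝟙, T): it contains 0 and is closed under addition and scalar multiplication. -/
open CategoryTheory MonoidalCategory Limits

/-- `X` belongs to the ideal `I_V`: `X` is a retract of `V ⊗ Y` for some object `Y`. -/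
def memIdeal {C : Type*} [Category C] [MonoidalCategory C] (V X : C) : Prop :=
  ∃ (Y : C) (α : X ⟶ V ⊗ Y) (β : V ⊗ Y ⟶ X), α ≫ β = 𝟙 X

/-- The set of "ideal" invariant tensors in `Hom(𝟙, T)`: morphisms that factor through a
coevaluation `η_V : 𝟙 ⟶ V ⊗ Vᘁ` for some `V ∈ I_{V₀}`. -/
def IT {C : Type*} [Category C] [MonoidalCategory C] [RightRigidCategory C]
    (V₀ T : C) : Set (𝟙_ C ⟶ T) :=
  { t | ∃ (V : C) (_ : memIdeal V₀ V) (f : V ⊗ Vᘁ ⟶ T), t = η_ V Vᘁ ≫ f }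

/-- Any morphism `𝟙 ⟶ V ⊗ Z` factors through the coevaluation `η_V`. -/
lemma factor_through_coev {C : Type*} [Category C] [MonoidalCategory C] (V Z : C)
    [HasRightDual V] (a : 𝟙_ C ⟶ V ⊗ Z) :
    a = η_ V Vᘁ ≫ V ◁ ((ρ_ (Vᘁ)).inv ≫ (tensorLeftHomEquiv (𝟙_ C) V (Vᘁ) Z).symm a) := by
  apply (tensorLeftHomEquiv (𝟙_ C) V (Vᘁ) Z).symm.injective
  rw [tensorLeftHomEquiv_symm_coevaluation_comp_whiskerLeft]
  simp

/-- The ideal `I_{V₀}` is closed under biproducts. -/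
lemma memIdeal_biprod {C : Type*} [Category C] [MonoidalCategory C] [Preadditive C]
    [MonoidalPreadditive C] [HasBinaryBiproducts C] {V₀ V₁ V₂ : C}
    (h₁ : memIdeal V₀ V₁) (h₂ : memIdeal V₀ V₂) : memIdeal V₀ (V₁ ⊞ V₂) := by
  obtain ⟨Y₁, α₁, β₁, hαβ₁⟩ := h₁
  obtain ⟨Y₂, α₂, β₂, hαβ₂⟩ := h₂
  refine ⟨Y₁ ⊞ Y₂,
    biprod.desc (α₁ ≫ V₀ ◁ biprod.inl) (α₂ ≫ V₀ ◁ biprod.inr),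
    biprod.lift (V₀ ◁ biprod.fst ≫ β₁) (V₀ ◁ biprod.snd ≫ β₂), ?_⟩
  ext <;> simp [← MonoidalCategory.whiskerLeft_comp_assoc, hαβ₁, hαβ₂]

/-- `IT(T)` contains `0` and is closed under addition and scalar multiplication, i.e. it is
a `ℂ`-subspace of `Hom(𝟙, T)`. -/
theorem IT_is_submodule {C : Type*} [Category C] [MonoidalCategory C] [Preadditive C]
    [MonoidalPreadditive C] [HasBinaryBiproducts C] [CategoryTheory.Linear ℂ C]
    [MonoidalLinear ℂ C] [RightRigidCategory C] (V₀ T : C) :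
    (0 : 𝟙_ C ⟶ T) ∈ IT V₀ T ∧
      (∀ t t' : 𝟙_ C ⟶ T, t ∈ IT V₀ T → t' ∈ IT V₀ T → t + t' ∈ IT V₀ T) ∧
      (∀ (c : ℂ) (t : 𝟙_ C ⟶ T), t ∈ IT V₀ T → c • t ∈ IT V₀ T) := by
  have hV₀ : memIdeal V₀ V₀ := ⟨𝟙_ C, (ρ_ V₀).inv, (ρ_ V₀).hom, by simp⟩
  refine ⟨⟨V₀, hV₀, 0, by simp⟩, ?_, ?_⟩
  · rintro t t' ⟨V₁, h₁, f₁, rfl⟩ ⟨V₂, h₂, f₂, rfl⟩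
    set W := V₁ ⊞ V₂
    set Z := (V₁ᘁ : C) ⊞ (V₂ᘁ : C)
    set a : 𝟙_ C ⟶ W ⊗ Z :=
      η_ V₁ (V₁ᘁ) ≫ (biprod.inl ⊗ₘ biprod.inl) + η_ V₂ (V₂ᘁ) ≫ (biprod.inr ⊗ₘ biprod.inr)
      with ha
    set b : W ⊗ Z ⟶ T :=
      ((biprod.fst : W ⟶ V₁) ⊗ₘ (biprod.fst : Z ⟶ (V₁ᘁ : C))) ≫ f₁ +
        ((biprod.snd : W ⟶ V₂) ⊗ₘ (biprod.snd : Z ⟶ (V₂ᘁ : C))) ≫ f₂ with hb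
    have hab : a ≫ b = η_ V₁ (V₁ᘁ) ≫ f₁ + η_ V₂ (V₂ᘁ) ≫ f₂ := by
      simp [ha, hb, tensorHom_comp_tensorHom_assoc]
    refine ⟨W, memIdeal_biprod h₁ h₂,
      (W ◁ ((ρ_ (Wᘁ)).inv ≫ (tensorLeftHomEquiv (𝟙_ C) W (Wᘁ) Z).symm a)) ≫ b, ?_⟩
    rw [← hab, ← Category.assoc, ← factor_through_coev]
  · rintro c t ⟨V, h, f, rfl⟩
    exact ⟨V, h, c • f, by rw [Linear.comp_smul]⟩
end

section
/- Let C be a ℂ-linear preadditive monoidal category with binary biproducts, in which composition and the tensor product of morphisms are ℂ-bilinear, and which has right duals. Fix an object V₀ and objects T', T of C. If t' : 𝟙 ⟶ T' is any morphism and t ∈ IT(T), then the composite 𝟙 ≅ 𝟙 ⊗ 𝟙 —(t' ⊗ t)→ T' ⊗ T belongs to IT(T' ⊗ T); that is, IT is a left ideal under tensoring by arbitrary morphisms out of the unit object. -/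
open CategoryTheory MonoidalCategory Limits

/-- `IT` is a left ideal: tensoring any `t' : 𝟙 ⟶ T'` with `t ∈ IT(T)` lands in `IT(T' ⊗ T)`. -/
theorem IT_tensor_left {C : Type*} [Category C] [MonoidalCategory C] [Preadditive C]
    [MonoidalPreadditive C] [HasBinaryBiproducts C] [CategoryTheory.Linear ℂ C]
    [MonoidalLinear ℂ C] [RightRigidCategory C] (V₀ T' T : C)
    (t' : 𝟙_ C ⟶ T') (t : 𝟙_ C ⟶ T) (ht : t ∈ IT V₀ T) :
    (λ_ (𝟙_ C)).inv ≫ (t' ⊗ₘ t) ∈ IT V₀ (T' ⊗ T) := by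
  obtain ⟨V, hV, f, rfl⟩ := ht
  refine ⟨V, hV, f ≫ (λ_ T).inv ≫ (t' ▷ T), ?_⟩
  rw [tensorHom_def', ← leftUnitor_inv_naturality_assoc]
  simp
end
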